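/- Let A and B be n×n complex matrices and let U : ℝ → Matrix (Fin n) (Fin n) ℂ be a differentiable solution of U'(t) = −i·(exp(i t A) · B · exp(−i t A)) · U(t) with U(0) = 1. Then for every t ∈ ℝ, exp(−i t (A + B)) = exp(−i t A) · U(t). -/

import Mathlib

open scoped Matrix.Norms.L2Operator

private lemma exp_deriv_aux {n : ℕ} (M : Matrix (Fin n) (Fin n) ℂ) (c : ℂ) (t : ℝ) :
    HasDerivAt (fun s : ℝ => NormedSpace.exp ((c * (s : ℂ)) • M))
      (NormedSpace.exp ((c * (t : ℂ)) • M) * (c • M)) t := by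
  have h := (hasDerivAt_exp_smul_const (𝕂 := ℂ) (c • M) ((t : ℝ) : ℂ)).scomp t
    Complex.ofRealCLM.hasDerivAt
  have hsm : ∀ u : ℂ, u • (c • M) = (c * u) • M := by
    intro u; rw [smul_smul, mul_comm]
  simpa [Function.comp_def, hsm] using h

/-- The interaction-picture evolution: if `U` solves
`U'(t) = -i·(e^{itA} B e^{-itA})·U(t)`, `U(0) = 1`, then
`e^{-it(A+B)} = e^{-itA} · U(t)` for all `t`. -/
theorem interaction_picture (n : ℕ) (A B : Matrix (Fin n) (Fin n) ℂ)
    (U : ℝ → Matrix (Fin n) (Fin n) ℂ) (hU0 : U 0 = 1)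
    (hU : ∀ t : ℝ, HasDerivAt U
      ((-Complex.I) • (NormedSpace.exp ((Complex.I * (t : ℂ)) • A) * B *
        NormedSpace.exp ((-Complex.I * (t : ℂ)) • A) * U t)) t) :
    ∀ t : ℝ, NormedSpace.exp ((-Complex.I * (t : ℂ)) • (A + B)) =
      NormedSpace.exp ((-Complex.I * (t : ℂ)) • A) * U t := by
  set F : ℝ → Matrix (Fin n) (Fin n) ℂ := fun s =>
    NormedSpace.exp ((Complex.I * (s : ℂ)) • (A + B)) *
      (NormedSpace.exp ((-Complex.I * (s : ℂ)) • A) * U s) with hF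
  have key : ∀ t : ℝ, HasDerivAt F 0 t := by
    intro t
    have h1 := exp_deriv_aux (A + B) Complex.I t
    have h2 := exp_deriv_aux A (-Complex.I) t
    have h3 := hU t
    have H := h1.mul (h2.mul h3)
    have h23 : NormedSpace.exp ((-Complex.I * (t : ℂ)) • A) *
        NormedSpace.exp ((Complex.I * (t : ℂ)) • A) = 1 := by
      rw [← Matrix.exp_add_of_commute _ _ (((Commute.refl A).smul_left _).smul_right _),
        show ((-Complex.I * (t : ℂ)) • A + (Complex.I * (t : ℂ)) • A) =
          (0 : Matrix (Fin n) (Fin n) ℂ) by module, NormedSpace.exp_zero]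
    have hA2 : NormedSpace.exp ((-Complex.I * (t : ℂ)) • A) * A =
        A * NormedSpace.exp ((-Complex.I * (t : ℂ)) • A) :=
      (((Commute.refl A).smul_right _).exp_right).symm.eq
    refine (H.congr_deriv ?_ :)
    symm
    simp only [smul_mul_assoc, mul_smul_comm, mul_assoc]
    rw [← mul_assoc (NormedSpace.exp ((-Complex.I * (t : ℂ)) • A)) A, hA2, mul_assoc,
      ← mul_assoc (NormedSpace.exp ((-Complex.I * (t : ℂ)) • A))
        (NormedSpace.exp ((Complex.I * (t : ℂ)) • A)), h23, one_mul]
    simp only [add_mul, mul_add, smul_add, mul_smul_comm]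
    module
  have hconst : ∀ t : ℝ, F t = F 0 := by
    intro t
    apply is_const_of_deriv_eq_zero (fun s => (key s).differentiableAt)
    intro s
    exact (key s).deriv
  intro t
  have hFt : F t = 1 := by
    rw [hconst t, hF]
    simp [hU0, NormedSpace.exp_zero]
  have hneg : NormedSpace.exp ((-Complex.I * (t : ℂ)) • (A + B)) *
      NormedSpace.exp ((Complex.I * (t : ℂ)) • (A + B)) = 1 := by
    rw [← Matrix.exp_add_of_commute _ _ (((Commute.refl (A + B)).smul_left _).smul_right _),
      show ((-Complex.I * (t : ℂ)) • (A + B) + (Complex.I * (t : ℂ)) • (A + B)) =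
        (0 : Matrix (Fin n) (Fin n) ℂ) by module, NormedSpace.exp_zero]
  calc NormedSpace.exp ((-Complex.I * (t : ℂ)) • (A + B))
      = NormedSpace.exp ((-Complex.I * (t : ℂ)) • (A + B)) * F t := by rw [hFt, mul_one]
    _ = (NormedSpace.exp ((-Complex.I * (t : ℂ)) • (A + B)) *
          NormedSpace.exp ((Complex.I * (t : ℂ)) • (A + B))) *
          (NormedSpace.exp ((-Complex.I * (t : ℂ)) • A) * U t) := by
        rw [hF]; exact (mul_assoc _ _ _).symm
    _ = NormedSpace.exp ((-Complex.I * (t : ℂ)) • A) * U t := by rw [hneg, one_mul]
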